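/- arXiv:2509.17591 — 2 statements merged into one kernel-verified Lean document; each statement's English description precedes it below -/
import Mathlib

section
/- Let ≤_T be either the lexicographic order with X₁ > X₂ or the graded order with X₂ > X₁. Let 1 ≤ t ≤ 4 with t ≤ ⌊r₁/2⌋ and t ≤ ⌊r₂/2⌋, let e ∈ 𝔽(r₁,r₂) with ω(e) ≤ t, let τ ∈ 𝓘, and let U be the syndrome table afforded by τ and e. Let l = (2t−1, 0) or l = (0, 2t−1), and let F = {f^(1),…,f^(d)} be a minimal set of polynomials for u^l with defining points s^(1),…,s^(d). Assume that neither of the following holds: (i) l = (0, 2t−1), d ≥ 2, and s^(2)_2 = t; (ii) l = (2t−1, 0) and s^(1)_1 = t. Then there exists f ∈ F with LP(f) ⪯ l and f[U]_l = 0. -/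
/-- A monomial order on ℕ × ℕ: a linear order compatible with addition
for which (0,0) is the least element. -/
structure MonOrd where
  le : ℕ × ℕ → ℕ × ℕ → Prop
  refl : ∀ a, le a a
  trans : ∀ a b c, le a b → le b c → le a c
  antisymm : ∀ a b, le a b → le b a → a = b
  total : ∀ a b, le a b ∨ le b a
  add_right : ∀ a b c, le a b → le (a + c) (b + c)
  zero_le : ∀ a, le (0, 0) a

/-- Strict version of a monomial order. -/
def MonOrd.lt (T : MonOrd) (a b : ℕ × ℕ) : Prop := T.le a b ∧ a ≠ b

/-- `s` is the leading power product exponent of `f` w.r.t. `T`. -/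
def IsLP {L : Type} [Field L] (T : MonOrd) (f : (ℕ × ℕ) →₀ L) (s : ℕ × ℕ) : Prop :=
  s ∈ f.support ∧ ∀ m ∈ f.support, T.le m s

/-- `f[U]_n`, computed with respect to a given leading exponent `s` of `f`. -/
noncomputable def fApp {L : Type} [Field L] (U : ℕ × ℕ → L) (f : (ℕ × ℕ) →₀ L)
    (s n : ℕ × ℕ) : L :=
  if s.1 ≤ n.1 ∧ s.2 ≤ n.2 then
    ∑ m ∈ f.support, f m * U (m.1 + n.1 - s.1, m.2 + n.2 - s.2)
  else 0

/-- `f` generates the doubly periodic array `U`. -/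
def GeneratesU {L : Type} [Field L] (T : MonOrd) (U : ℕ × ℕ → L) (f : (ℕ × ℕ) →₀ L) : Prop :=
  ∃ s, IsLP T f s ∧ ∀ n, fApp U f s n = 0

/-- `f` generates the finite subarray `u^l` of `U`. -/
def GeneratesUpTo {L : Type} [Field L] (T : MonOrd) (U : ℕ × ℕ → L) (l : ℕ × ℕ)
    (f : (ℕ × ℕ) →₀ L) : Prop :=
  ∃ s, IsLP T f s ∧ ∀ k, s.1 ≤ k.1 → s.2 ≤ k.2 → T.lt k l → fApp U f s k = 0

/-- `U` is a doubly periodic array of period r₁ × r₂. -/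
def DoublyPeriodic {L : Type} (r₁ r₂ : ℕ) (U : ℕ × ℕ → L) : Prop :=
  ∀ n m : ℕ × ℕ, n.1 % r₁ = m.1 % r₁ → n.2 % r₂ = m.2 % r₂ → U n = U m

/-- Evaluation of a bivariate polynomial at a point `(x, y)`. -/
noncomputable def polyEval {L : Type} [Field L] (f : (ℕ × ℕ) →₀ L) (x y : L) : L :=
  ∑ m ∈ f.support, f m * x ^ m.1 * y ^ m.2

/-- The syndrome table afforded by `τ` and `e`:  `u_n = e(α^(τ+n))`. -/
noncomputable def synTable {F L : Type} [Field F] [Field L] [Algebra F L] {r₁ r₂ : ℕ}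
    (α₁ α₂ : L) (τ : Fin r₁ × Fin r₂) (e : Fin r₁ × Fin r₂ → F) : ℕ × ℕ → L :=
  fun n => ∑ p : Fin r₁ × Fin r₂,
    algebraMap F L (e p) * (α₁ ^ ((τ.1 : ℕ) + n.1)) ^ (p.1 : ℕ)
      * (α₂ ^ ((τ.2 : ℕ) + n.2)) ^ (p.2 : ℕ)

/-- The weight ω(e): number of nonzero coefficients. -/
noncomputable def wt {F : Type} [Field F] {r₁ r₂ : ℕ} (e : Fin r₁ × Fin r₂ → F) : ℕ :=
  {p | e p ≠ 0}.ncard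

/-- The hyperbolic set B(δ) of amplitude δ inside {0,…,r₁−1} × {0,…,r₂−1}. -/
def hypB (r₁ r₂ δ : ℕ) : Set (ℕ × ℕ) :=
  {l | l.1 < r₁ ∧ l.2 < r₂ ∧ (l.1 + 1) * (l.2 + 1) ≤ δ ∧ l ≠ (δ - 1, 0) ∧ l ≠ (0, δ - 1)}

/-- The border set 𝔉 = {l ∈ B(2t+1) : 2t ≤ (l₁+1)(l₂+1)}. -/
def frontF (r₁ r₂ t : ℕ) : Set (ℕ × ℕ) :=
  {l ∈ hypB r₁ r₂ (2 * t + 1) | 2 * t ≤ (l.1 + 1) * (l.2 + 1)}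

/-- The lexicographic order with X₁ > X₂. -/
def lexMonOrd : MonOrd where
  le a b := a.1 < b.1 ∨ (a.1 = b.1 ∧ a.2 ≤ b.2)
  refl a := by omega
  trans a b c h1 h2 := by omega
  antisymm a b h1 h2 := by
    obtain ⟨a1, a2⟩ := a; obtain ⟨b1, b2⟩ := b
    simp_all only [Prod.mk.injEq]; omega
  total a b := by omega
  add_right a b c h := by
    obtain ⟨a1, a2⟩ := a; obtain ⟨b1, b2⟩ := b; obtain ⟨c1, c2⟩ := c
    simp_all only [Prod.mk_add_mk]; omega
  zero_le a := by
    obtain ⟨a1, a2⟩ := a; simp only []; omega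

/-- The (reverse) graded order with X₂ > X₁. -/
def grMonOrd : MonOrd where
  le a b := a.1 + a.2 < b.1 + b.2 ∨ (a.1 + a.2 = b.1 + b.2 ∧ a.2 ≤ b.2)
  refl a := by omega
  trans a b c h1 h2 := by omega
  antisymm a b h1 h2 := by
    obtain ⟨a1, a2⟩ := a; obtain ⟨b1, b2⟩ := b
    simp_all only [Prod.mk.injEq]; omega
  total a b := by omega
  add_right a b c h := by
    obtain ⟨a1, a2⟩ := a; obtain ⟨b1, b2⟩ := b; obtain ⟨c1, c2⟩ := c
    simp_all only [Prod.mk_add_mk]; omega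
  zero_le a := by
    obtain ⟨a1, a2⟩ := a; simp only []; omega

/-- The ideal (X₁^{r₁} − 1, X₂^{r₂} − 1) of L[X₁,X₂]. -/
noncomputable def periodIdeal (L : Type) [Field L] (r₁ r₂ : ℕ) :
    Ideal (AddMonoidAlgebra L (ℕ × ℕ)) :=
  Ideal.span {AddMonoidAlgebra.single (r₁, 0) 1 - 1, AddMonoidAlgebra.single (0, r₂) 1 - 1}


section Helpers
variable {L : Type} [Field L]

lemma monle {T : MonOrd} (hT : T = lexMonOrd ∨ T = grMonOrd) {m s : ℕ × ℕ}
    (h1 : m.1 ≤ s.1) (h2 : m.2 ≤ s.2) : T.le m s := by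
  rcases hT with rfl | rfl
  · show m.1 < s.1 ∨ (m.1 = s.1 ∧ m.2 ≤ s.2); omega
  · show m.1 + m.2 < s.1 + s.2 ∨ (m.1 + m.2 = s.1 + s.2 ∧ m.2 ≤ s.2); omega

lemma monlt_ax1 {T : MonOrd} (hT : T = lexMonOrd ∨ T = grMonOrd) {k N : ℕ} (h : k < N) :
    T.lt (k, 0) (N, 0) := by
  refine ⟨?_, by simp [Prod.ext_iff]; omega⟩
  rcases hT with rfl | rfl
  · show k < N ∨ (k = N ∧ (0:ℕ) ≤ 0); omega
  · show k + 0 < N + 0 ∨ _; left; omega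

lemma monlt_ax2 {T : MonOrd} (hT : T = lexMonOrd ∨ T = grMonOrd) {k N : ℕ} (h : k < N) :
    T.lt (0, k) (0, N) := by
  refine ⟨?_, by simp [Prod.ext_iff]; omega⟩
  rcases hT with rfl | rfl
  · show (0:ℕ) < 0 ∨ ((0:ℕ) = 0 ∧ k ≤ N); omega
  · show 0 + k < 0 + N ∨ _; left; omega

lemma exists_Tmax (T : MonOrd) (s : Finset (ℕ × ℕ)) (hs : s.Nonempty) :
    ∃ m ∈ s, ∀ x ∈ s, T.le x m := by
  classical
  induction s using Finset.induction_on with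
  | empty => exact absurd hs (by simp)
  | @insert a u ha ih =>
    rcases u.eq_empty_or_nonempty with rfl | hu
    · exact ⟨a, by simp, by simpa using T.refl a⟩
    · obtain ⟨m, hm, hmax⟩ := ih hu
      rcases T.total a m with h | h
      · exact ⟨m, Finset.mem_insert_of_mem hm, by
          intro x hx
          rcases Finset.mem_insert.1 hx with rfl | hx
          · exact h
          · exact hmax x hx⟩
      · exact ⟨a, Finset.mem_insert_self a u, by
          intro x hx
          rcases Finset.mem_insert.1 hx with rfl | hx
          · exact T.refl x
          · exact T.trans _ _ _ (hmax x hx) h⟩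
end Helpers

section Formula
variable {F L : Type} [Field F] [Field L] [Algebra F L] {r₁ r₂ : ℕ}

lemma polyEval_eq_sum (f : (ℕ × ℕ) →₀ L) (x y : L) :
    polyEval f x y = f.sum fun m c => c * x ^ m.1 * y ^ m.2 := rfl

lemma fApp_syn (α₁ α₂ : L) (τ : Fin r₁ × Fin r₂) (e : Fin r₁ × Fin r₂ → F)
    (f : (ℕ × ℕ) →₀ L) (s n : ℕ × ℕ) (h1 : s.1 ≤ n.1) (h2 : s.2 ≤ n.2) :
    fApp (synTable α₁ α₂ τ e) f s n =
      ∑ p : Fin r₁ × Fin r₂,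
        (algebraMap F L (e p) * (α₁ ^ (p.1 : ℕ)) ^ (τ.1 : ℕ) * (α₂ ^ (p.2 : ℕ)) ^ (τ.2 : ℕ))
          * polyEval f (α₁ ^ (p.1 : ℕ)) (α₂ ^ (p.2 : ℕ))
          * (α₁ ^ (p.1 : ℕ)) ^ (n.1 - s.1) * (α₂ ^ (p.2 : ℕ)) ^ (n.2 - s.2) := by
  rw [fApp, if_pos ⟨h1, h2⟩]
  unfold synTable
  simp only [Finset.mul_sum]
  rw [Finset.sum_comm]
  refine Finset.sum_congr rfl fun p _ => ?_
  rw [polyEval]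
  simp only [Finset.mul_sum, Finset.sum_mul]
  refine Finset.sum_congr rfl fun m _ => ?_
  have e1 : (τ.1 : ℕ) + (m.1 + n.1 - s.1) = (τ.1 : ℕ) + m.1 + (n.1 - s.1) := by omega
  have e2 : (τ.2 : ℕ) + (m.2 + n.2 - s.2) = (τ.2 : ℕ) + m.2 + (n.2 - s.2) := by omega
  rw [e1, e2, pow_add, pow_add, pow_add, pow_add, mul_pow, mul_pow,
    ← pow_mul, ← pow_mul, ← pow_mul, ← pow_mul, ← pow_mul', ← pow_mul', ← pow_mul', ← pow_mul']
  ring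

lemma fApp_syn_vanish (α₁ α₂ : L) (τ : Fin r₁ × Fin r₂) (e : Fin r₁ × Fin r₂ → F)
    (f : (ℕ × ℕ) →₀ L)
    (hvan : ∀ p : Fin r₁ × Fin r₂, e p ≠ 0 → polyEval f (α₁ ^ (p.1 : ℕ)) (α₂ ^ (p.2 : ℕ)) = 0)
    (s n : ℕ × ℕ) : fApp (synTable α₁ α₂ τ e) f s n = 0 := by
  by_cases h : s.1 ≤ n.1 ∧ s.2 ≤ n.2
  · rw [fApp_syn α₁ α₂ τ e f s n h.1 h.2]
    refine Finset.sum_eq_zero fun p _ => ?_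
    by_cases he : e p = 0
    · simp [he]
    · rw [hvan p he]; ring
  · rw [fApp, if_neg h]
end Formula

section Axis
variable {L : Type} [Field L]

def emb1 : ℕ ↪ ℕ × ℕ := ⟨fun j => (j, 0), fun a b h => by simpa using h⟩
def emb2 : ℕ ↪ ℕ × ℕ := ⟨fun j => (0, j), fun a b h => by simpa using h⟩

noncomputable def axPoly1 (P : Polynomial L) : (ℕ × ℕ) →₀ L := Finsupp.embDomain emb1 P.toFinsupp.coeff
noncomputable def axPoly2 (P : Polynomial L) : (ℕ × ℕ) →₀ L := Finsupp.embDomain emb2 P.toFinsupp.coeff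

lemma polyEval_axPoly1 (P : Polynomial L) (x y : L) : polyEval (axPoly1 P) x y = P.eval x := by
  rw [polyEval_eq_sum, axPoly1, Finsupp.sum_embDomain, Polynomial.eval_eq_sum, Polynomial.sum]
  exact Finset.sum_congr rfl fun j _ => by show _ * x ^ j * y ^ 0 = _; simp [Polynomial.coeff]

lemma polyEval_axPoly2 (P : Polynomial L) (x y : L) : polyEval (axPoly2 P) x y = P.eval y := by
  rw [polyEval_eq_sum, axPoly2, Finsupp.sum_embDomain, Polynomial.eval_eq_sum, Polynomial.sum]
  exact Finset.sum_congr rfl fun j _ => by show _ * x ^ 0 * y ^ j = _; simp [Polynomial.coeff]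

lemma support_axPoly1 (P : Polynomial L) {m : ℕ × ℕ} (hm : m ∈ (axPoly1 P).support) :
    m.2 = 0 ∧ P.coeff m.1 ≠ 0 := by
  rw [axPoly1, Finsupp.support_embDomain, Finset.mem_map] at hm
  obtain ⟨j, hj, rfl⟩ := hm
  exact ⟨rfl, by show P.coeff j ≠ 0; simpa [Polynomial.coeff] using hj⟩

lemma support_axPoly2 (P : Polynomial L) {m : ℕ × ℕ} (hm : m ∈ (axPoly2 P).support) :
    m.1 = 0 ∧ P.coeff m.2 ≠ 0 := by
  rw [axPoly2, Finsupp.support_embDomain, Finset.mem_map] at hm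
  obtain ⟨j, hj, rfl⟩ := hm
  exact ⟨rfl, by show P.coeff j ≠ 0; simpa [Polynomial.coeff] using hj⟩

lemma mem_support_axPoly1 (P : Polynomial L) {j : ℕ} (hj : P.coeff j ≠ 0) :
    ((j, 0) : ℕ × ℕ) ∈ (axPoly1 P).support := by
  rw [axPoly1, Finsupp.support_embDomain, Finset.mem_map]
  exact ⟨j, by simpa [Polynomial.coeff] using hj, rfl⟩

lemma mem_support_axPoly2 (P : Polynomial L) {j : ℕ} (hj : P.coeff j ≠ 0) :
    ((0, j) : ℕ × ℕ) ∈ (axPoly2 P).support := by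
  rw [axPoly2, Finsupp.support_embDomain, Finset.mem_map]
  exact ⟨j, by simpa [Polynomial.coeff] using hj, rfl⟩

/-- The vanishing polynomial of a finite set of values. -/
noncomputable def vanP (S : Finset L) : Polynomial L := ∏ x ∈ S, (Polynomial.X - Polynomial.C x)

lemma vanP_monic (S : Finset L) : (vanP S).Monic :=
  Polynomial.monic_prod_of_monic _ _ fun x _ => Polynomial.monic_X_sub_C x

lemma vanP_natDegree (S : Finset L) : (vanP S).natDegree = S.card := by
  rw [vanP, Polynomial.natDegree_prod_of_monic _ _ fun x _ => Polynomial.monic_X_sub_C x]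
  simp

lemma vanP_eval {S : Finset L} {x : L} (hx : x ∈ S) : (vanP S).eval x = 0 := by
  rw [vanP, Polynomial.eval_prod]
  exact Finset.prod_eq_zero hx (by simp)

/-- Key 1-D recurrence: an exponential sum whose frequencies (on nonzero terms) lie in `S`
vanishes at `N` if it vanishes on the `S.card` previous points. -/
lemma expSum_rec {ι : Type} [Fintype ι] (C X : ι → L) (S : Finset L)
    (hS : ∀ p, C p ≠ 0 → X p ∈ S) (a N : ℕ) (hN : a + S.card ≤ N)
    (hzero : ∀ k, a ≤ k → k < N → ∑ p : ι, C p * X p ^ (k - a) = 0) :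
    ∑ p : ι, C p * X p ^ (N - a) = 0 := by
  set tc := S.card with htc
  set P := vanP S with hP
  have hCeval : ∀ p, C p * P.eval (X p) = 0 := by
    intro p
    by_cases h : C p = 0
    · simp [h]
    · rw [vanP_eval (hS p h), mul_zero]
  have step1 : ∑ p : ι, C p * X p ^ (N - a)
      = ∑ p : ι, C p * X p ^ (N - a - tc) * (X p ^ tc - P.eval (X p)) := by
    refine Finset.sum_congr rfl fun p _ => ?_
    have : X p ^ (N - a) = X p ^ (N - a - tc) * X p ^ tc := by
      rw [← pow_add]; congr 1; omega
    rw [this, mul_sub]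
    have h0 : C p * X p ^ (N - a - tc) * P.eval (X p) = 0 := by
      calc C p * X p ^ (N - a - tc) * P.eval (X p)
          = C p * P.eval (X p) * X p ^ (N - a - tc) := by ring
        _ = 0 := by rw [hCeval p, zero_mul]
    rw [h0, sub_zero]; ring
  have hPdeg : P.natDegree = tc := vanP_natDegree S
  have hevalP : ∀ x : L, P.eval x = x ^ tc + ∑ j ∈ Finset.range tc, P.coeff j * x ^ j := by
    intro x
    rw [Polynomial.eval_eq_sum_range, hPdeg, Finset.sum_range_succ]
    have : P.coeff tc = 1 := by
      have := (vanP_monic S).leadingCoeff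
      rwa [Polynomial.leadingCoeff, hPdeg] at this
    rw [this, one_mul, add_comm]
  rw [step1]
  have step2 : ∀ p : ι, C p * X p ^ (N - a - tc) * (X p ^ tc - P.eval (X p))
      = -∑ j ∈ Finset.range tc, P.coeff j * (C p * X p ^ (j + (N - a - tc))) := by
    intro p
    rw [hevalP (X p), sub_add_cancel_left, mul_neg, Finset.mul_sum]
    refine congrArg Neg.neg (Finset.sum_congr rfl fun j _ => ?_)
    rw [pow_add]; ring
  calc ∑ p : ι, C p * X p ^ (N - a - tc) * (X p ^ tc - P.eval (X p))
      = ∑ p : ι, -∑ j ∈ Finset.range tc, P.coeff j * (C p * X p ^ (j + (N - a - tc))) :=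
        Finset.sum_congr rfl fun p _ => step2 p
    _ = -∑ j ∈ Finset.range tc, P.coeff j * ∑ p : ι, C p * X p ^ (j + (N - a - tc)) := by
        rw [Finset.sum_neg_distrib, Finset.sum_comm, neg_inj]
        exact Finset.sum_congr rfl fun j _ => (Finset.mul_sum _ _ _).symm
    _ = 0 := by
        refine neg_eq_zero.2 (Finset.sum_eq_zero fun j hj => ?_)
        have hj' := Finset.mem_range.1 hj
        have : j + (N - a - tc) = (N - tc + j) - a := by omega
        rw [this, hzero (N - tc + j) (by omega) (by omega), mul_zero]
end Axis

/-- either order: estimation of values at the last points of the axes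
l = (2t−1, 0) or l = (0, 2t−1) of B(2t+1), outside the exceptional cases. -/
theorem estimation_axes
    (q : ℕ) (hq : IsPrimePow q)
    (F : Type) [Field F] [Fintype F] (hF : Fintype.card F = q)
    (L : Type) [Field L] [Algebra F L]
    (r₁ r₂ : ℕ) (hr₁ : 0 < r₁) (hr₂ : 0 < r₂) (hco : Nat.Coprime q (r₁ * r₂))
    (α₁ α₂ : L) (hα₁ : IsPrimitiveRoot α₁ r₁) (hα₂ : IsPrimitiveRoot α₂ r₂)
    (T : MonOrd) (hT : T = lexMonOrd ∨ T = grMonOrd)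
    (t : ℕ) (ht1 : 1 ≤ t) (ht4 : t ≤ 4) (htr1 : t ≤ r₁ / 2) (htr2 : t ≤ r₂ / 2)
    (e : Fin r₁ × Fin r₂ → F) (hω : wt e ≤ t) (τ : Fin r₁ × Fin r₂)
    (U : ℕ × ℕ → L) (hU : U = synTable α₁ α₂ τ e)
    (l : ℕ × ℕ) (hl : l = (2 * t - 1, 0) ∨ l = (0, 2 * t - 1))
    (d : ℕ) (hd : 0 < d)
    (f : Fin d → (ℕ × ℕ) →₀ L) (s : Fin d → ℕ × ℕ)
    (hLP : ∀ i, IsLP T (f i) (s i))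
    (hdec1 : ∀ i j : Fin d, i < j → (s j).1 < (s i).1)
    (hlast1 : (s ⟨d - 1, Nat.sub_lt hd Nat.one_pos⟩).1 = 0)
    (hinc2 : ∀ i j : Fin d, i < j → (s i).2 < (s j).2)
    (hfirst2 : (s ⟨0, hd⟩).2 = 0)
    (hgen : ∀ i : Fin d, ∀ k : ℕ × ℕ, (s i).1 ≤ k.1 → (s i).2 ≤ k.2 →
      T.lt k l → fApp U (f i) (s i) k = 0)
    (hmin : ∀ (g : (ℕ × ℕ) →₀ L) (sg : ℕ × ℕ), IsLP T g sg →
      (∃ i : Fin d, ∃ h : i.1 + 1 < d,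
        sg.1 ≤ (s i).1 - 1 ∧ sg.2 ≤ (s ⟨i.1 + 1, h⟩).2 - 1) →
      ∃ k : ℕ × ℕ, sg.1 ≤ k.1 ∧ sg.2 ≤ k.2 ∧ T.lt k l ∧ fApp U g sg k ≠ 0)
    (hnot1 : ¬ (l = (0, 2 * t - 1) ∧ ∃ h : 1 < d, (s ⟨1, h⟩).2 = t))
    (hnot2 : ¬ (l = (2 * t - 1, 0) ∧ (s ⟨0, hd⟩).1 = t)) :
    ∃ i : Fin d, (s i).1 ≤ l.1 ∧ (s i).2 ≤ l.2 ∧ fApp U (f i) (s i) l = 0 := by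
  classical
  subst hU
  set E : Finset (Fin r₁ × Fin r₂) := Finset.univ.filter (fun p => e p ≠ 0) with hE
  have hwtE : E.card ≤ t := by
    have h1 : wt e = E.card := by
      rw [wt, Set.ncard_eq_toFinset_card', hE]
      congr 1
      ext p
      simp
    omega
  have hXmem : ∀ p : Fin r₁ × Fin r₂, e p ≠ 0 → p ∈ E := fun p hp => by
    rw [hE]; exact Finset.mem_filter.2 ⟨Finset.mem_univ p, hp⟩
  rcases hl with rfl | rfl
  · -- Case l = (2t-1, 0)
    have hs02 : (s ⟨0, hd⟩).2 = 0 := hfirst2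
    set a := (s ⟨0, hd⟩).1 with hadef
    set S : Finset L := E.image (fun p => α₁ ^ (p.1 : ℕ)) with hS
    set tc := S.card with htcdef
    have htct : tc ≤ t := le_trans Finset.card_image_le hwtE
    have hLPσ : IsLP T (axPoly1 (vanP S)) (tc, 0) := by
      constructor
      · apply mem_support_axPoly1
        have h1 : (vanP S).coeff tc = 1 := by
          have h2 := (vanP_monic S).leadingCoeff
          rwa [Polynomial.leadingCoeff, vanP_natDegree] at h2
        rw [h1]; exact one_ne_zero
      · intro m hm
        obtain ⟨hm2, hm1⟩ := support_axPoly1 _ hm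
        have h3 : m.1 ≤ tc := by
          have h4 := Polynomial.le_natDegree_of_ne_zero hm1
          rwa [vanP_natDegree] at h4
        exact monle hT h3 (by omega)
    have hσvan : ∀ p : Fin r₁ × Fin r₂, e p ≠ 0 →
        polyEval (axPoly1 (vanP S)) (α₁ ^ (p.1 : ℕ)) (α₂ ^ (p.2 : ℕ)) = 0 := by
      intro p hp
      rw [polyEval_axPoly1]
      exact vanP_eval (Finset.mem_image_of_mem _ (hXmem p hp))
    have ha : a ≤ tc := by
      rcases Nat.lt_or_ge 1 d with hd2 | hd2
      · by_contra hcon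
        obtain ⟨k, _, _, _, hk⟩ := hmin (axPoly1 (vanP S)) (tc, 0) hLPσ
          ⟨⟨0, hd⟩, by show 0 + 1 < d; omega, by show tc ≤ a - 1; omega, Nat.zero_le _⟩
        exact hk (fApp_syn_vanish _ _ _ _ _ hσvan _ _)
      · have hd1 : d = 1 := by omega
        have hfin : (⟨d - 1, Nat.sub_lt hd Nat.one_pos⟩ : Fin d) = ⟨0, hd⟩ :=
          Fin.mk_eq_mk.2 (by omega)
        rw [hfin] at hlast1
        omega
    have hane : a ≠ t := fun h => hnot2 ⟨rfl, h⟩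
    have hbound : a + tc ≤ 2 * t - 1 := by omega
    have hterm : ∀ k : ℕ, a ≤ k →
        fApp (synTable α₁ α₂ τ e) (f ⟨0, hd⟩) (s ⟨0, hd⟩) (k, 0)
          = ∑ p : Fin r₁ × Fin r₂,
              (algebraMap F L (e p) * (α₁ ^ (p.1 : ℕ)) ^ (τ.1 : ℕ)
                  * (α₂ ^ (p.2 : ℕ)) ^ (τ.2 : ℕ))
                * polyEval (f ⟨0, hd⟩) (α₁ ^ (p.1 : ℕ)) (α₂ ^ (p.2 : ℕ))
                * (α₁ ^ (p.1 : ℕ)) ^ (k - a) := by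
      intro k hk
      rw [fApp_syn α₁ α₂ τ e (f ⟨0, hd⟩) (s ⟨0, hd⟩) (k, 0) hk (by omega)]
      refine Finset.sum_congr rfl fun p _ => ?_
      simp [hs02]
      exact Or.inl rfl
    refine ⟨⟨0, hd⟩, by show a ≤ 2 * t - 1; omega, by show (s ⟨0, hd⟩).2 ≤ 0; omega, ?_⟩
    rw [hterm (2 * t - 1) (by omega)]
    refine expSum_rec _ _ S (fun p hC => ?_) a (2 * t - 1) hbound (fun k hk1 hk2 => ?_)
    · have hep : e p ≠ 0 := by
        intro h; apply hC; rw [h]; simp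
      exact Finset.mem_image_of_mem _ (hXmem p hep)
    · rw [← hterm k hk1]
      exact hgen ⟨0, hd⟩ (k, 0) hk1 (by omega) (monlt_ax1 hT hk2)
  · -- Case l = (0, 2t-1)
    have hs11 : (s ⟨d - 1, Nat.sub_lt hd Nat.one_pos⟩).1 = 0 := hlast1
    set b := (s ⟨d - 1, Nat.sub_lt hd Nat.one_pos⟩).2 with hbdef
    set S2 : Finset L := E.image (fun p => α₂ ^ (p.2 : ℕ)) with hS2
    set tc2 := S2.card with htc2def
    have htcE : tc2 ≤ E.card := Finset.card_image_le
    have htct : tc2 ≤ t := le_trans htcE hwtE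
    have hLPσ : IsLP T (axPoly2 (vanP S2)) (0, tc2) := by
      constructor
      · apply mem_support_axPoly2
        have h1 : (vanP S2).coeff tc2 = 1 := by
          have h2 := (vanP_monic S2).leadingCoeff
          rwa [Polynomial.leadingCoeff, vanP_natDegree] at h2
        rw [h1]; exact one_ne_zero
      · intro m hm
        obtain ⟨hm1, hm2⟩ := support_axPoly2 _ hm
        have h3 : m.2 ≤ tc2 := by
          have h4 := Polynomial.le_natDegree_of_ne_zero hm2
          rwa [vanP_natDegree] at h4
        exact monle hT (by omega) h3
    have hσvan : ∀ p : Fin r₁ × Fin r₂, e p ≠ 0 →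
        polyEval (axPoly2 (vanP S2)) (α₁ ^ (p.1 : ℕ)) (α₂ ^ (p.2 : ℕ)) = 0 := by
      intro p hp
      rw [polyEval_axPoly2]
      exact vanP_eval (Finset.mem_image_of_mem _ (hXmem p hp))
    have hb : b ≤ tc2 := by
      rcases Nat.lt_or_ge 1 d with hd2 | hd2
      · by_contra hcon
        have h2d : d - 2 < d := by omega
        have hsucc : d - 2 + 1 < d := by omega
        have hfeq : (⟨d - 2 + 1, hsucc⟩ : Fin d) = ⟨d - 1, Nat.sub_lt hd Nat.one_pos⟩ :=
          Fin.mk_eq_mk.2 (by omega)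
        obtain ⟨k, _, _, _, hk⟩ := hmin (axPoly2 (vanP S2)) (0, tc2) hLPσ
          ⟨⟨d - 2, h2d⟩, hsucc, Nat.zero_le _, by
            show tc2 ≤ (s (⟨d - 2 + 1, hsucc⟩ : Fin d)).2 - 1
            rw [congrArg s hfeq]
            omega⟩
        exact hk (fApp_syn_vanish _ _ _ _ _ hσvan _ _)
      · have hd1 : d = 1 := by omega
        have hfin : (⟨d - 1, Nat.sub_lt hd Nat.one_pos⟩ : Fin d) = ⟨0, hd⟩ :=
          Fin.mk_eq_mk.2 (by omega)
        rw [hfin] at hbdef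
        omega
    by_cases hgood : b + tc2 ≤ 2 * t - 1
    · have hterm : ∀ k : ℕ, b ≤ k →
          fApp (synTable α₁ α₂ τ e) (f ⟨d - 1, Nat.sub_lt hd Nat.one_pos⟩)
              (s ⟨d - 1, Nat.sub_lt hd Nat.one_pos⟩) (0, k)
            = ∑ p : Fin r₁ × Fin r₂,
                (algebraMap F L (e p) * (α₁ ^ (p.1 : ℕ)) ^ (τ.1 : ℕ)
                    * (α₂ ^ (p.2 : ℕ)) ^ (τ.2 : ℕ))
                  * polyEval (f ⟨d - 1, Nat.sub_lt hd Nat.one_pos⟩)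
                      (α₁ ^ (p.1 : ℕ)) (α₂ ^ (p.2 : ℕ))
                  * (α₂ ^ (p.2 : ℕ)) ^ (k - b) := by
        intro k hk
        rw [fApp_syn α₁ α₂ τ e _ _ (0, k) (by omega) hk]
        refine Finset.sum_congr rfl fun p _ => ?_
        simp [hs11]
        exact Or.inl rfl
      refine ⟨⟨d - 1, Nat.sub_lt hd Nat.one_pos⟩,
        by show (s _).1 ≤ 0; omega, by show b ≤ 2 * t - 1; omega, ?_⟩
      rw [hterm (2 * t - 1) (by omega)]
      refine expSum_rec _ _ S2 (fun p hC => ?_) b (2 * t - 1) hgood (fun k hk1 hk2 => ?_)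
      · have hep : e p ≠ 0 := by
          intro h; apply hC; rw [h]; simp
        exact Finset.mem_image_of_mem _ (hXmem p hep)
      · rw [← hterm k hk1]
        exact hgen _ (0, k) (by omega) hk1 (monlt_ax2 hT hk2)
    · -- exceptional situation: contradiction
      exfalso
      have hd2 : 1 < d := by
        by_contra h
        have hd1 : d = 1 := by omega
        have hfin : (⟨d - 1, Nat.sub_lt hd Nat.one_pos⟩ : Fin d) = ⟨0, hd⟩ :=
          Fin.mk_eq_mk.2 (by omega)
        rw [hfin] at hbdef
        omega
      have hbt : b = t ∧ tc2 = t := by omega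
      have hcardE : E.card = t := by omega
      have hd3 : 2 < d := by
        by_contra h
        have hdd : d = 2 := by omega
        refine hnot1 ⟨rfl, by omega, ?_⟩
        have hfin : (⟨1, by omega⟩ : Fin d) = ⟨d - 1, Nat.sub_lt hd Nat.one_pos⟩ :=
          Fin.mk_eq_mk.2 (by omega)
        rw [hfin]
        omega
      have hinj : Set.InjOn (fun p : Fin r₁ × Fin r₂ => α₂ ^ (p.2 : ℕ)) ↑E := by
        apply Finset.card_image_iff.1
        rw [← hS2, ← htc2def, hbt.2, hcardE]
      set ρ := Lagrange.interpolate E (fun p : Fin r₁ × Fin r₂ => α₂ ^ (p.2 : ℕ))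
        (fun p : Fin r₁ × Fin r₂ => α₁ ^ (p.1 : ℕ)) with hρ
      have hρsup : ∀ j ∈ ρ.support, j ≤ t - 1 := by
        intro j hj
        have h1 : (j : WithBot ℕ) ≤ ρ.degree :=
          Polynomial.le_degree_of_ne_zero (Polynomial.mem_support_iff.1 hj)
        have h2 : ρ.degree < (E.card : WithBot ℕ) := Lagrange.degree_interpolate_lt _ hinj
        rw [hcardE] at h2
        have h3 : (j : WithBot ℕ) < (t : WithBot ℕ) := lt_of_le_of_lt h1 h2
        have h4 : j < t := by exact_mod_cast h3
        omega
      set g : (ℕ × ℕ) →₀ L := Finsupp.single ((1, 0) : ℕ × ℕ) (1 : L) - axPoly2 ρ with hg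
      have hax10 : axPoly2 ρ ((1, 0) : ℕ × ℕ) = 0 := by
        apply Finsupp.embDomain_notin_range
        rintro ⟨j, hj⟩
        exact absurd (show (0:ℕ) = 1 from congrArg Prod.fst hj) (by decide)
      have hg10 : g ((1, 0) : ℕ × ℕ) = 1 := by
        rw [hg, Finsupp.sub_apply, hax10, Finsupp.single_eq_same, sub_zero]
      have hgsupp : ∀ m ∈ g.support, m = ((1, 0) : ℕ × ℕ) ∨ (m.1 = 0 ∧ m.2 ≤ t - 1) := by
        intro m hm
        have h1 := Finsupp.support_sub hm
        rcases Finset.mem_union.1 h1 with h2 | h2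
        · left
          exact Finset.mem_singleton.1 (Finsupp.support_single_subset h2)
        · right
          obtain ⟨hm1, hm2⟩ := support_axPoly2 _ h2
          exact ⟨hm1, hρsup m.2 (Polynomial.mem_support_iff.2 hm2)⟩
      have hgeval : ∀ x y : L, polyEval g x y = x - ρ.eval y := by
        intro x y
        rw [polyEval_eq_sum, hg,
          Finsupp.sum_sub_index (fun m b1 b2 => by ring),
          Finsupp.sum_single_index (by ring)]
        rw [← polyEval_eq_sum, polyEval_axPoly2]
        ring
      have hgvan : ∀ p : Fin r₁ × Fin r₂, e p ≠ 0 →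
          polyEval g (α₁ ^ (p.1 : ℕ)) (α₂ ^ (p.2 : ℕ)) = 0 := by
        intro p hp
        have hnode : Polynomial.eval (α₂ ^ (p.2 : ℕ)) ρ = α₁ ^ (p.1 : ℕ) :=
          Lagrange.eval_interpolate_at_node _ hinj (hXmem p hp)
        rw [hgeval, hnode, sub_self]
      obtain ⟨sg, hsgmem, hsgmax⟩ := exists_Tmax T g.support
        ⟨(1, 0), Finsupp.mem_support_iff.2 (by rw [hg10]; exact one_ne_zero)⟩
      have hΔ : ∃ i : Fin d, ∃ h : i.1 + 1 < d,
          sg.1 ≤ (s i).1 - 1 ∧ sg.2 ≤ (s ⟨i.1 + 1, h⟩).2 - 1 := by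
        have h2d : d - 2 < d := by omega
        have h3d : d - 3 < d := by omega
        have hsucc2 : d - 2 + 1 < d := by omega
        have hsucc3 : d - 3 + 1 < d := by omega
        have hfeq2 : (⟨d - 2 + 1, hsucc2⟩ : Fin d) = ⟨d - 1, Nat.sub_lt hd Nat.one_pos⟩ :=
          Fin.mk_eq_mk.2 (by omega)
        rcases hgsupp sg hsgmem with rfl | ⟨h1, h2⟩
        · refine ⟨⟨d - 3, h3d⟩, hsucc3, ?_, Nat.zero_le _⟩
          have hlt1 : (⟨d - 2, h2d⟩ : Fin d) < ⟨d - 1, Nat.sub_lt hd Nat.one_pos⟩ :=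
            Fin.mk_lt_mk.2 (by omega)
          have hlt2 : (⟨d - 3, h3d⟩ : Fin d) < ⟨d - 2, h2d⟩ :=
            Fin.mk_lt_mk.2 (by omega)
          have hc1 := hdec1 _ _ hlt1
          have hc2 := hdec1 _ _ hlt2
          show 1 ≤ (s ⟨d - 3, h3d⟩).1 - 1
          omega
        · refine ⟨⟨d - 2, h2d⟩, hsucc2, by omega, ?_⟩
          show sg.2 ≤ (s (⟨d - 2 + 1, hsucc2⟩ : Fin d)).2 - 1
          rw [congrArg s hfeq2]
          omega
      obtain ⟨k, _, _, _, hk⟩ := hmin g sg ⟨hsgmem, hsgmax⟩ hΔ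
      exact hk (fApp_syn_vanish _ _ _ _ _ hgvan _ _)
end

section
/- Let ≤_T be the graded order with X₂ > X₁. Let 2 ≤ t ≤ 4 with t ≤ ⌊r₁/2⌋ and t ≤ ⌊r₂/2⌋, let e ∈ 𝔽(r₁,r₂) with ω(e) ≤ t, let τ ∈ 𝓘, and let U be the syndrome table afforded by τ and e. Let l = (l₁,l₂) ∈ 𝔉 with l₁ ≠ 0 and l₂ = 1. Let F = {f^(1), f^(2)} be a minimal set of polynomials for u^l with defining points s^(1), s^(2) satisfying s^(1)_1 = t and s^(2)_2 = 1, and let (g, k₁) be an auxiliary polynomial for index 1 with v₁ = g[U]_{k₁} ≠ 0. Then there exists b ∈ L such that the polynomial h_b = f^(2) − (b/v₁)·g generates u^l and satisfies h_b[U]_k = 0 for every k ∈ B(2t+1) with l ≤_T k. -/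
open Polynomial in
lemma vandermonde_zero {K : Type*} [Field K] {A : Type*} [DecidableEq A]
    (S : Finset A) (x : A → K) (hinj : Set.InjOn x S) (z : A → K)
    (hz : ∀ j < S.card, ∑ p ∈ S, z p * x p ^ j = 0) :
    ∀ p ∈ S, z p = 0 := by
  intro p₀ hp₀
  have hcard : 1 ≤ S.card := Finset.card_pos.mpr ⟨p₀, hp₀⟩
  set R : Polynomial K := ∏ q ∈ S.erase p₀, (X - C (x q)) with hR
  have hRdeg : R.natDegree ≤ S.card - 1 := by
    rw [hR, natDegree_prod _ _ (fun q _ => X_sub_C_ne_zero (x q))]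
    simp [natDegree_X_sub_C, Finset.card_erase_of_mem hp₀]
  have key : ∑ p ∈ S, z p * R.eval (x p) = 0 := by
    have h1 : ∀ p ∈ S, z p * R.eval (x p)
        = ∑ j ∈ Finset.range S.card, R.coeff j * (z p * x p ^ j) := by
      intro p _
      rw [eval_eq_sum_range' (lt_of_le_of_lt hRdeg (Nat.sub_lt hcard one_pos)), Finset.mul_sum]
      exact Finset.sum_congr rfl fun j _ => by ring
    rw [Finset.sum_congr rfl h1, Finset.sum_comm]
    apply Finset.sum_eq_zero
    intro j hj
    rw [← Finset.mul_sum, hz j (Finset.mem_range.mp hj), mul_zero]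
  have h2 : ∑ p ∈ S, z p * R.eval (x p) = z p₀ * R.eval (x p₀) := by
    rw [← Finset.add_sum_erase _ _ hp₀]
    have : ∑ p ∈ S.erase p₀, z p * R.eval (x p) = 0 := by
      apply Finset.sum_eq_zero
      intro p hp
      have : R.eval (x p) = 0 := by
        rw [hR, eval_prod]
        exact Finset.prod_eq_zero hp (by simp)
      rw [this, mul_zero]
    rw [this, add_zero]
  have h3 : R.eval (x p₀) ≠ 0 := by
    rw [hR, eval_prod]
    apply Finset.prod_ne_zero_iff.mpr
    intro q hq
    simp only [eval_sub, eval_X, eval_C, sub_ne_zero]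
    exact fun h => (Finset.ne_of_mem_erase hq) (hinj (Finset.mem_of_mem_erase hq) hp₀ h.symm)
  have h4 : z p₀ * R.eval (x p₀) = 0 := by rw [← h2]; exact key
  exact (mul_eq_zero.mp h4).resolve_right h3


lemma vandermonde_prop {K : Type*} [Field K] {A : Type*} [DecidableEq A]
    (S : Finset A) (x z w : A → K) (hinj : Set.InjOn x S)
    (hz : ∀ j, j + 1 < S.card → ∑ p ∈ S, z p * x p ^ j = 0)
    (hw : ∀ j, j + 1 < S.card → ∑ p ∈ S, w p * x p ^ j = 0)
    (p₀ : A) (hp₀ : p₀ ∈ S) (hw0 : w p₀ ≠ 0) :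
    ∀ p ∈ S, z p = (z p₀ / w p₀) * w p := by
  set μ := z p₀ / w p₀ with hμ
  set y : A → K := fun p => z p - μ * w p with hy
  have hy0 : y p₀ = 0 := by
    simp only [hy, hμ]
    field_simp
    ring
  have hcard : (S.erase p₀).card = S.card - 1 := Finset.card_erase_of_mem hp₀
  have hker : ∀ p ∈ S.erase p₀, y p = 0 := by
    apply vandermonde_zero (S.erase p₀) x (hinj.mono (by exact_mod_cast Finset.erase_subset p₀ S)) y
    intro j hj
    have hj' : j + 1 < S.card := by omega
    have : ∑ p ∈ S, y p * x p ^ j = 0 := by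
      have : ∑ p ∈ S, y p * x p ^ j
          = (∑ p ∈ S, z p * x p ^ j) - μ * ∑ p ∈ S, w p * x p ^ j := by
        rw [Finset.mul_sum, ← Finset.sum_sub_distrib]
        exact Finset.sum_congr rfl fun p _ => by simp only [hy]; ring
      rw [this, hz j hj', hw j hj', mul_zero, sub_zero]
    rw [← Finset.add_sum_erase _ _ hp₀, hy0, zero_mul, zero_add] at this
    exact this
  intro p hp
  rcases eq_or_ne p p₀ with rfl | hne
  · have := hy0; simp only [hy] at this; exact sub_eq_zero.mp this
  · have := hker p (Finset.mem_erase.mpr ⟨hne, hp⟩)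
    simp only [hy] at this; exact sub_eq_zero.mp this

section AuxLemmas

variable {L : Type} [Field L]

lemma polyEval_eq_sum_superset (f : (ℕ × ℕ) →₀ L) (T : Finset (ℕ × ℕ))
    (hT : f.support ⊆ T) (x y : L) :
    polyEval f x y = ∑ m ∈ T, f m * x ^ m.1 * y ^ m.2 := by
  unfold polyEval
  exact Finset.sum_subset hT (fun m _ hm => by
    rw [Finsupp.notMem_support_iff.mp hm, zero_mul, zero_mul])

lemma polyEval_sub_smul (f g : (ℕ × ℕ) →₀ L) (μ x y : L) :
    polyEval (f - μ • g) x y = polyEval f x y - μ * polyEval g x y := by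
  classical
  have hsub : (f - μ • g).support ⊆ f.support ∪ g.support :=
    (Finsupp.support_sub).trans (Finset.union_subset_union (le_refl _) (Finsupp.support_smul))
  rw [polyEval_eq_sum_superset (f - μ • g) (f.support ∪ g.support) hsub,
      polyEval_eq_sum_superset f (f.support ∪ g.support) Finset.subset_union_left,
      polyEval_eq_sum_superset g (f.support ∪ g.support) Finset.subset_union_right,
      Finset.mul_sum, ← Finset.sum_sub_distrib]
  apply Finset.sum_congr rfl
  intro m _
  simp only [Finsupp.sub_apply, Finsupp.smul_apply, smul_eq_mul]
  ring

lemma fApp_of_syndrome {ι : Type} [Fintype ι] (c x y : ι → L)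
    (U : ℕ × ℕ → L) (hU : ∀ n : ℕ × ℕ, U n = ∑ p : ι, c p * x p ^ n.1 * y p ^ n.2)
    (f : (ℕ × ℕ) →₀ L) (s n : ℕ × ℕ) (h1 : s.1 ≤ n.1) (h2 : s.2 ≤ n.2) :
    fApp U f s n = ∑ p : ι,
      (c p * polyEval f (x p) (y p)) * (x p ^ (n.1 - s.1) * y p ^ (n.2 - s.2)) := by
  unfold fApp
  rw [if_pos ⟨h1, h2⟩]
  have hterm : ∀ m ∈ f.support,
      f m * U (m.1 + n.1 - s.1, m.2 + n.2 - s.2)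
        = ∑ p : ι, (c p * (f m * x p ^ m.1 * y p ^ m.2)) * (x p ^ (n.1 - s.1) * y p ^ (n.2 - s.2)) := by
    intro m _
    rw [hU, Finset.mul_sum]
    apply Finset.sum_congr rfl
    intro p _
    have e1 : m.1 + n.1 - s.1 = m.1 + (n.1 - s.1) := by omega
    have e2 : m.2 + n.2 - s.2 = m.2 + (n.2 - s.2) := by omega
    simp only [e1, e2, pow_add]
    ring
  rw [Finset.sum_congr rfl hterm, Finset.sum_comm]
  apply Finset.sum_congr rfl
  intro p _
  unfold polyEval
  rw [Finset.mul_sum, Finset.sum_mul]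

lemma fApp_eq_zero_of_vanish {ι : Type} [Fintype ι] (c x y : ι → L)
    (U : ℕ × ℕ → L) (hU : ∀ n : ℕ × ℕ, U n = ∑ p : ι, c p * x p ^ n.1 * y p ^ n.2)
    (f : (ℕ × ℕ) →₀ L) (hvan : ∀ p : ι, c p * polyEval f (x p) (y p) = 0)
    (s n : ℕ × ℕ) : fApp U f s n = 0 := by
  by_cases h : s.1 ≤ n.1 ∧ s.2 ≤ n.2
  · rw [fApp_of_syndrome c x y U hU f s n h.1 h.2]
    exact Finset.sum_eq_zero fun p _ => by rw [hvan p, zero_mul]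
  · unfold fApp; rw [if_neg h]

lemma synTable_eq {F : Type} [Field F] [Algebra F L] {r₁ r₂ : ℕ}
    (α₁ α₂ : L) (τ : Fin r₁ × Fin r₂) (e : Fin r₁ × Fin r₂ → F) (n : ℕ × ℕ) :
    synTable (F := F) α₁ α₂ τ e n = ∑ p : Fin r₁ × Fin r₂,
      (algebraMap F L (e p) * (α₁ ^ (p.1 : ℕ)) ^ (τ.1 : ℕ) * (α₂ ^ (p.2 : ℕ)) ^ (τ.2 : ℕ))
        * (α₁ ^ (p.1 : ℕ)) ^ n.1 * (α₂ ^ (p.2 : ℕ)) ^ n.2 := by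
  unfold synTable
  apply Finset.sum_congr rfl
  intro p _
  have key : ∀ (u : L) (a b k : ℕ), (u ^ (a + b)) ^ k = (u ^ k) ^ a * (u ^ k) ^ b := by
    intro u a b k
    rw [← pow_mul, ← pow_mul, ← pow_mul, ← pow_add]
    congr 1
    ring
  rw [key α₁ _ _ _, key α₂ _ _ _]
  ring

end AuxLemmas

/-- Embed a univariate polynomial as a bivariate finsupp supported on the X₁-axis. -/
noncomputable def embedX1 {L : Type} [Field L] (P : Polynomial L) : (ℕ × ℕ) →₀ L :=
  Finsupp.embDomain ⟨fun j => (j, 0), fun a b h => by simpa using congrArg Prod.fst h⟩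
    P.toFinsupp.coeff

section EmbedLemmas

variable {L : Type} [Field L]

lemma embedX1_support (P : Polynomial L) :
    (embedX1 P).support = P.support.map ⟨fun j => (j, 0), fun a b h => by simpa using congrArg Prod.fst h⟩ := by
  unfold embedX1
  rw [Finsupp.support_embDomain]
  rfl

lemma embedX1_apply (P : Polynomial L) (j : ℕ) : embedX1 P (j, 0) = P.coeff j := by
  unfold embedX1
  exact Finsupp.embDomain_apply_self _ _ j

lemma polyEval_embedX1 (P : Polynomial L) (x y : L) :
    polyEval (embedX1 P) x y = P.eval x := by
  unfold polyEval
  rw [embedX1_support, Finset.sum_map]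
  rw [Polynomial.eval_eq_sum, Polynomial.sum_def]
  apply Finset.sum_congr rfl
  intro j hj
  change embedX1 P (j, 0) * x ^ j * y ^ 0 = _
  rw [embedX1_apply]
  simp [Polynomial.mem_support_iff] at hj ⊢

lemma isLP_embedX1 (P : Polynomial L) (hP : P.Monic) :
    IsLP grMonOrd (embedX1 P) (P.natDegree, 0) := by
  constructor
  · rw [embedX1_support, Finset.mem_map]
    refine ⟨P.natDegree, ?_, rfl⟩
    rw [Polynomial.mem_support_iff, hP.coeff_natDegree]
    exact one_ne_zero
  · intro m hm
    rw [embedX1_support, Finset.mem_map] at hm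
    obtain ⟨j, hj, rfl⟩ := hm
    have : j ≤ P.natDegree := Polynomial.le_natDegree_of_mem_supp j hj
    show _ ∨ _
    change j + 0 < P.natDegree + 0 ∨ (j + 0 = P.natDegree + 0 ∧ 0 ≤ 0)
    omega

end EmbedLemmas
/-- graded order, X₂ > X₁; exceptional case d = 2, s⁽¹⁾₁ = t,
s⁽²⁾₂ = 1 = l₂: existence of b ∈ L such that h_b = f⁽²⁾ − (b/v₁)·g generates u^l and
kills all later points of B(2t+1). -/
theorem exceptional_case_graded
    (q : ℕ) (hq : IsPrimePow q)
    (F : Type) [Field F] [Fintype F] (hF : Fintype.card F = q)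
    (L : Type) [Field L] [Algebra F L]
    (r₁ r₂ : ℕ) (hr₁ : 0 < r₁) (hr₂ : 0 < r₂) (hco : Nat.Coprime q (r₁ * r₂))
    (α₁ α₂ : L) (hα₁ : IsPrimitiveRoot α₁ r₁) (hα₂ : IsPrimitiveRoot α₂ r₂)
    (t : ℕ) (ht2 : 2 ≤ t) (ht4 : t ≤ 4) (htr1 : t ≤ r₁ / 2) (htr2 : t ≤ r₂ / 2)
    (e : Fin r₁ × Fin r₂ → F) (hω : wt e ≤ t) (τ : Fin r₁ × Fin r₂)
    (U : ℕ × ℕ → L) (hU : U = synTable α₁ α₂ τ e)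
    (l : ℕ × ℕ) (hl : l ∈ frontF r₁ r₂ t) (hl1 : l.1 ≠ 0) (hl2 : l.2 = 1)
    (f₁ f₂ : (ℕ × ℕ) →₀ L) (s₁ s₂ : ℕ × ℕ)
    (hLP1 : IsLP grMonOrd f₁ s₁) (hLP2 : IsLP grMonOrd f₂ s₂)
    (hstair1 : s₂.1 = 0) (hstair2 : s₁.2 = 0)
    (hstair3 : s₂.1 < s₁.1) (hstair4 : s₁.2 < s₂.2)
    (hs1 : s₁.1 = t) (hs2 : s₂.2 = 1)
    (hgen1 : ∀ k : ℕ × ℕ, s₁.1 ≤ k.1 → s₁.2 ≤ k.2 → grMonOrd.lt k l → fApp U f₁ s₁ k = 0)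
    (hgen2 : ∀ k : ℕ × ℕ, s₂.1 ≤ k.1 → s₂.2 ≤ k.2 → grMonOrd.lt k l → fApp U f₂ s₂ k = 0)
    (hmin : ∀ (g : (ℕ × ℕ) →₀ L) (sg : ℕ × ℕ), IsLP grMonOrd g sg →
      sg.1 ≤ s₁.1 - 1 → sg.2 ≤ s₂.2 - 1 →
      ∃ k : ℕ × ℕ, sg.1 ≤ k.1 ∧ sg.2 ≤ k.2 ∧ grMonOrd.lt k l ∧ fApp U g sg k ≠ 0)
    (g : (ℕ × ℕ) →₀ L) (sg k₁ : ℕ × ℕ) (hgLP : IsLP grMonOrd g sg)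
    (hk₁l : grMonOrd.lt k₁ l)
    (hgpast : ∀ m : ℕ × ℕ, sg.1 ≤ m.1 → sg.2 ≤ m.2 → grMonOrd.lt m k₁ → fApp U g sg m = 0)
    (hk₁LP : (k₁.1 - sg.1, k₁.2 - sg.2) = (s₁.1 - 1, s₂.2 - 1))
    (v₁ : L) (hv₁ : fApp U g sg k₁ = v₁) (hv₁0 : v₁ ≠ 0) :
    ∃ b : L, ∃ sh : ℕ × ℕ,
      IsLP grMonOrd (f₂ - (b / v₁) • g) sh ∧
      (∀ k : ℕ × ℕ, sh.1 ≤ k.1 → sh.2 ≤ k.2 → grMonOrd.lt k l →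
        fApp U (f₂ - (b / v₁) • g) sh k = 0) ∧
      (∀ k ∈ hypB r₁ r₂ (2 * t + 1), grMonOrd.le l k →
        fApp U (f₂ - (b / v₁) • g) sh k = 0) := by
  classical
  -- unpack the front set membership
  simp only [frontF, hypB, Set.mem_setOf_eq, Set.mem_sep_iff] at hl
  obtain ⟨⟨hlr1, hlr2, hlB, hlne1, hlne2⟩, hlF⟩ := hl
  rw [hl2] at hlB hlF
  have hl₁ : l.1 = t - 1 := by omega
  -- the character data
  set x : Fin r₁ × Fin r₂ → L := fun p => α₁ ^ (p.1 : ℕ) with hx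
  set y : Fin r₁ × Fin r₂ → L := fun p => α₂ ^ (p.2 : ℕ) with hy
  set c : Fin r₁ × Fin r₂ → L := fun p =>
    algebraMap F L (e p) * x p ^ (τ.1 : ℕ) * y p ^ (τ.2 : ℕ) with hc
  have hUeq : ∀ n : ℕ × ℕ, U n = ∑ p : Fin r₁ × Fin r₂, c p * x p ^ n.1 * y p ^ n.2 := by
    intro n
    rw [hU, synTable_eq]
  -- support of the error
  set Pf : Finset (Fin r₁ × Fin r₂) := Finset.univ.filter (fun p => e p ≠ 0) with hPf
  have hcPf : ∀ p, p ∉ Pf → c p = 0 := by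
    intro p hp
    simp only [hPf, Finset.mem_filter, Finset.mem_univ, true_and, not_not] at hp
    simp only [hc, hp, map_zero, zero_mul]
  have hwt : wt e = Pf.card := by
    unfold wt
    rw [show {p | e p ≠ 0} = (↑Pf : Set (Fin r₁ × Fin r₂)) by
      ext p; simp [hPf]]
    exact Set.ncard_coe_finset _
  have hPfle : Pf.card ≤ t := by omega
  -- fApp over the error support
  have hfApp2 : ∀ (f : (ℕ × ℕ) →₀ L) (s n : ℕ × ℕ), s.1 ≤ n.1 → s.2 ≤ n.2 →
      fApp U f s n = ∑ p ∈ Pf,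
        (c p * polyEval f (x p) (y p)) * (x p ^ (n.1 - s.1) * y p ^ (n.2 - s.2)) := by
    intro f s n h1 h2
    rw [fApp_of_syndrome c x y U hUeq f s n h1 h2]
    exact (Finset.sum_subset (Finset.subset_univ Pf)
      (fun p _ hp => by rw [hcPf p hp, zero_mul, zero_mul])).symm
  -- distinctness of first coordinates: the univariate locator argument
  set D : Finset L := Pf.image x with hD
  set σP : Polynomial L := ∏ u ∈ D, (Polynomial.X - Polynomial.C u) with hσ
  have hσmonic : σP.Monic := Polynomial.monic_prod_of_monic _ _
    (fun u _ => Polynomial.monic_X_sub_C u)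
  have hσdeg : σP.natDegree = D.card := by
    rw [hσ, Polynomial.natDegree_prod _ _ (fun u _ => Polynomial.X_sub_C_ne_zero u)]
    simp [Polynomial.natDegree_X_sub_C]
  have hσvan : ∀ p, c p * polyEval (embedX1 σP) (x p) (y p) = 0 := by
    intro p
    by_cases hp : p ∈ Pf
    · rw [polyEval_embedX1]
      have hz : σP.eval (x p) = 0 := by
        rw [hσ, Polynomial.eval_prod]
        apply Finset.prod_eq_zero (Finset.mem_image_of_mem x hp)
        simp
      rw [hz, mul_zero]
    · rw [hcPf p hp, zero_mul]
  have hDt : t ≤ D.card := by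
    by_contra hcon
    push_neg at hcon
    obtain ⟨k, _, _, _, hne⟩ := hmin (embedX1 σP) (σP.natDegree, 0)
      (isLP_embedX1 σP hσmonic)
      (by show σP.natDegree ≤ s₁.1 - 1; omega)
      (Nat.zero_le _)
    exact hne (fApp_eq_zero_of_vanish c x y U hUeq _ hσvan _ _)
  have hPft : Pf.card = t := le_antisymm hPfle (le_trans hDt Finset.card_image_le)
  have hDcard : D.card = Pf.card := le_antisymm Finset.card_image_le (hPft ▸ hDt)
  have hinj : Set.InjOn x ↑Pf := Finset.card_image_iff.mp hDcard
  -- facts about sg and k₁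
  have hsgk : sg.1 ≤ k₁.1 ∧ sg.2 ≤ k₁.2 := by
    by_contra hcon
    apply hv₁0
    rw [← hv₁]
    unfold fApp
    rw [if_neg hcon]
  have hk1a : k₁.1 - sg.1 = s₁.1 - 1 := congrArg Prod.fst hk₁LP
  have hk1b : k₁.2 - sg.2 = s₂.2 - 1 := congrArg Prod.snd hk₁LP
  have hk11 : k₁.1 = sg.1 + (t - 1) := by omega
  have hk12 : k₁.2 = sg.2 := by omega
  have hsg : sg.2 = 0 ∧ sg.1 ≤ 1 := by
    rcases hk₁l with ⟨hle, hne⟩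
    have hne' : k₁.1 ≠ l.1 ∨ k₁.2 ≠ l.2 := by
      by_contra hcc
      push_neg at hcc
      exact hne (Prod.ext hcc.1 hcc.2)
    rcases hle with h | ⟨h1, h2⟩ <;> rcases hne' with h' | h' <;> omega
  -- the Vandermonde constraints from f₂
  have hzcon : ∀ j, j + 1 < Pf.card →
      ∑ p ∈ Pf, (c p * polyEval f₂ (x p) (y p)) * x p ^ j = 0 := by
    intro j hj
    have hj' : j + 1 < t := by omega
    have hlt : grMonOrd.lt (j, 1) l := by
      constructor
      · show j + 1 < l.1 + l.2 ∨ (j + 1 = l.1 + l.2 ∧ 1 ≤ l.2)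
        omega
      · intro hcontra
        have : j = l.1 := congrArg Prod.fst hcontra
        omega
    have hk := hgen2 (j, 1) (by show s₂.1 ≤ j; omega) (by show s₂.2 ≤ 1; omega) hlt
    rw [hfApp2 f₂ s₂ (j, 1) (by show s₂.1 ≤ j; omega) (by show s₂.2 ≤ 1; omega)] at hk
    have hconv : ∀ p ∈ Pf,
        (c p * polyEval f₂ (x p) (y p)) * (x p ^ ((j, 1).1 - s₂.1) * y p ^ ((j, 1).2 - s₂.2))
          = (c p * polyEval f₂ (x p) (y p)) * x p ^ j := by
      intro p _
      have e1 : (j, 1).1 - s₂.1 = j := by show j - s₂.1 = j; omega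
      have e2 : (j, 1).2 - s₂.2 = 0 := by show 1 - s₂.2 = 0; omega
      rw [e1, e2, pow_zero, mul_one]
    rw [Finset.sum_congr rfl hconv] at hk
    exact hk
  -- the Vandermonde constraints from g
  have hwcon : ∀ j, j + 1 < Pf.card →
      ∑ p ∈ Pf, (c p * polyEval g (x p) (y p)) * x p ^ j = 0 := by
    intro j hj
    have hj' : j + 1 < t := by omega
    have hlt : grMonOrd.lt (sg.1 + j, sg.2) k₁ := by
      constructor
      · show sg.1 + j + sg.2 < k₁.1 + k₁.2 ∨ (sg.1 + j + sg.2 = k₁.1 + k₁.2 ∧ sg.2 ≤ k₁.2)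
        omega
      · intro hcontra
        have : sg.1 + j = k₁.1 := congrArg Prod.fst hcontra
        omega
    have hm := hgpast (sg.1 + j, sg.2) (by show sg.1 ≤ sg.1 + j; omega)
      (by show sg.2 ≤ sg.2; omega) hlt
    rw [hfApp2 g sg (sg.1 + j, sg.2) (by show sg.1 ≤ sg.1 + j; omega)
      (by show sg.2 ≤ sg.2; omega)] at hm
    have hconv : ∀ p ∈ Pf,
        (c p * polyEval g (x p) (y p)) *
            (x p ^ ((sg.1 + j, sg.2).1 - sg.1) * y p ^ ((sg.1 + j, sg.2).2 - sg.2))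
          = (c p * polyEval g (x p) (y p)) * x p ^ j := by
      intro p _
      have e1 : (sg.1 + j, sg.2).1 - sg.1 = j := by show sg.1 + j - sg.1 = j; omega
      have e2 : (sg.1 + j, sg.2).2 - sg.2 = 0 := by show sg.2 - sg.2 = 0; omega
      rw [e1, e2, pow_zero, mul_one]
    rw [Finset.sum_congr rfl hconv] at hm
    exact hm
  -- the discrepancy value of g
  have hvsum : ∑ p ∈ Pf, (c p * polyEval g (x p) (y p)) * x p ^ (t - 1) = v₁ := by
    have hk := hv₁
    rw [hfApp2 g sg k₁ hsgk.1 hsgk.2] at hk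
    rw [← hk]
    apply Finset.sum_congr rfl
    intro p _
    rw [show k₁.1 - sg.1 = t - 1 by omega, show k₁.2 - sg.2 = 0 by omega, pow_zero, mul_one]
  have hex : ∃ p₀ ∈ Pf, c p₀ * polyEval g (x p₀) (y p₀) ≠ 0 := by
    by_contra hcon
    push_neg at hcon
    apply hv₁0
    rw [← hvsum]
    exact Finset.sum_eq_zero fun p hp => by rw [hcon p hp, zero_mul]
  obtain ⟨p₀, hp₀, hw0⟩ := hex
  set μ : L := (c p₀ * polyEval f₂ (x p₀) (y p₀)) / (c p₀ * polyEval g (x p₀) (y p₀)) with hμ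
  have hprop := vandermonde_prop Pf x (fun p => c p * polyEval f₂ (x p) (y p))
    (fun p => c p * polyEval g (x p) (y p)) hinj hzcon hwcon p₀ hp₀ hw0
  -- h_b vanishes at all error locations
  have hvan_h : ∀ p, c p * polyEval (f₂ - μ • g) (x p) (y p) = 0 := by
    intro p
    rw [polyEval_sub_smul]
    by_cases hp : p ∈ Pf
    · have hzp := hprop p hp
      rw [hμ]
      linear_combination hzp
    · rw [hcPf p hp, zero_mul]
  have hall : ∀ s n, fApp U (f₂ - μ • g) s n = 0 :=
    fApp_eq_zero_of_vanish c x y U hUeq _ hvan_h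
  -- leading exponent of h_b is s₂
  have hgs₂ : g s₂ = 0 := by
    by_contra hgs
    have hmem := hgLP.2 s₂ (Finsupp.mem_support_iff.mpr hgs)
    rcases hmem with h | ⟨h1, h2⟩ <;> omega
  have hhs₂ : (f₂ - μ • g) s₂ ≠ 0 := by
    rw [Finsupp.sub_apply, Finsupp.smul_apply, hgs₂, smul_zero, sub_zero]
    exact Finsupp.mem_support_iff.mp hLP2.1
  have hIsLPh : IsLP grMonOrd (f₂ - μ • g) s₂ := by
    constructor
    · exact Finsupp.mem_support_iff.mpr hhs₂
    · intro m hm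
      have hm' : f₂ m ≠ 0 ∨ g m ≠ 0 := by
        by_contra hcc
        push_neg at hcc
        apply Finsupp.mem_support_iff.mp hm
        rw [Finsupp.sub_apply, Finsupp.smul_apply, hcc.1, hcc.2, smul_zero, sub_zero]
      rcases hm' with h | h
      · exact hLP2.2 m (Finsupp.mem_support_iff.mpr h)
      · have h1 := hgLP.2 m (Finsupp.mem_support_iff.mpr h)
        have h2 : grMonOrd.le sg s₂ := by
          show sg.1 + sg.2 < s₂.1 + s₂.2 ∨ (sg.1 + sg.2 = s₂.1 + s₂.2 ∧ sg.2 ≤ s₂.2)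
          omega
        exact grMonOrd.trans m sg s₂ h1 h2
  -- assemble
  have hbv : μ * v₁ / v₁ = μ := mul_div_cancel_right₀ μ hv₁0
  refine ⟨μ * v₁, s₂, ?_, ?_, ?_⟩
  · rw [hbv]; exact hIsLPh
  · intro k _ _ _; rw [hbv]; exact hall s₂ k
  · intro k _ _; rw [hbv]; exact hall s₂ k
end
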